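/- (Discrete Leibniz-commutator estimate, case $n=0$.) Let $1 \leq \alpha \leq 2$ and let $u \in H^{\alpha}(\mathbb{T})$ with Fourier coefficients $u_k$. Then the function $F_\alpha(u) := \bar{u}|D|^\alpha u + u |D|^\alpha \bar{u} - |D|^\alpha(|u|^2)$ satisfies $\|F_\alpha(u)\|_{L^2} \leq C \, \| |D|^{\alpha/2}\tilde{u} \|_{L^4}^2$, where $\tilde{u} := \sum_k |u_k| e^{ikx}$ and $C$ is an absolute constant (one may take $C = 2$). -/
import Mathlib


open Real Complex


lemma rpow_subadd {x y : ℝ} (p : ℝ) (hx : 0 ≤ x) (hy : 0 ≤ y) (hp : 0 ≤ p) (hp1 : p ≤ 1) :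
    (x + y) ^ p ≤ x ^ p + y ^ p := by
  have h := NNReal.rpow_add_le_add_rpow x.toNNReal y.toNNReal hp hp1
  rw [← Real.toNNReal_add hx hy] at h
  have h2 := NNReal.coe_le_coe.2 h
  simpa [NNReal.coe_rpow, Real.coe_toNNReal _ hx, Real.coe_toNNReal _ hy,
    Real.coe_toNNReal _ (add_nonneg hx hy)] using h2

lemma sq_rpow_half {t α : ℝ} (ht : 0 ≤ t) : (t ^ (α/2)) ^ 2 = t ^ α := by
  rw [← Real.rpow_natCast (t ^ (α/2)) 2, ← Real.rpow_mul ht]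
  norm_num

lemma key_lower (α : ℝ) (hα0 : 0 ≤ α) (hα2 : α ≤ 2) {x y z : ℝ} (hx : 0 ≤ x) (hy : 0 ≤ y)
    (hxy : y ≤ x) (h1 : x - y ≤ z) : x ^ α + y ^ α - z ^ α ≤ 2 * (x ^ (α/2) * y ^ (α/2)) := by
  have hp : (0:ℝ) ≤ α/2 := by linarith
  have hp1 : α/2 ≤ 1 := by linarith
  have hsub : x ^ (α/2) ≤ (x - y) ^ (α/2) + y ^ (α/2) := by
    have := rpow_subadd (α/2) (sub_nonneg.2 hxy) hy hp hp1
    rwa [sub_add_cancel] at this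
  have hyx : y ^ (α/2) ≤ x ^ (α/2) := Real.rpow_le_rpow hy hxy hp
  have hz0 : (0:ℝ) ≤ x - y := sub_nonneg.2 hxy
  have h2 : (x - y) ^ α ≤ z ^ α := Real.rpow_le_rpow hz0 h1 hα0
  have e1 := sq_rpow_half (α := α) hx
  have e2 := sq_rpow_half (α := α) hy
  have e3 := sq_rpow_half (α := α) hz0
  nlinarith [sq_nonneg (x ^ (α/2) - y ^ (α/2)), sq_nonneg ((x-y)^(α/2))]

lemma key_ineq (α : ℝ) (hα0 : 0 ≤ α) (hα2 : α ≤ 2) {x y z : ℝ} (hx : 0 ≤ x) (hy : 0 ≤ y)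
    (hz : 0 ≤ z) (h1 : |x - y| ≤ z) (h2 : z ≤ x + y) :
    |x ^ α + y ^ α - z ^ α| ≤ 2 * (x ^ (α/2) * y ^ (α/2)) := by
  have hp : (0:ℝ) ≤ α/2 := by linarith
  have hp1 : α/2 ≤ 1 := by linarith
  rw [abs_sub_le_iff] at h1
  rw [abs_le]
  constructor
  · -- z^α ≤ x^α + y^α + 2 x^{α/2} y^{α/2}
    have hzx : z ^ α ≤ (x + y) ^ α := Real.rpow_le_rpow hz h2 hα0
    have hs : (x + y) ^ (α/2) ≤ x ^ (α/2) + y ^ (α/2) := rpow_subadd _ hx hy hp hp1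
    have e1 := sq_rpow_half (α := α) hx
    have e2 := sq_rpow_half (α := α) hy
    have e3 := sq_rpow_half (α := α) (add_nonneg hx hy)
    nlinarith [Real.rpow_nonneg (add_nonneg hx hy) (α/2), Real.rpow_nonneg hx (α/2),
      Real.rpow_nonneg hy (α/2)]
  · rcases le_total y x with h | h
    · exact key_lower α hα0 hα2 hx hy h h1.1
    · have := key_lower α hα0 hα2 hy hx h (by linarith [h1.2])
      linarith [this, mul_comm (y ^ (α/2)) (x ^ (α/2))]

lemma summable_mul_of_sq {f g : ℤ → ℝ} (hf : Summable fun i => f i ^ 2)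
    (hg : Summable fun i => g i ^ 2) (hf0 : ∀ i, 0 ≤ f i) (hg0 : ∀ i, 0 ≤ g i) :
    Summable fun i => f i * g i := by
  refine Summable.of_nonneg_of_le (fun i => mul_nonneg (hf0 i) (hg0 i)) (fun i => ?_)
    (((hf.add hg).div_const 2))
  have := sq_nonneg (f i - g i)
  nlinarith

lemma tsum_CS {f g : ℤ → ℝ} (hf : Summable fun i => f i ^ 2)
    (hg : Summable fun i => g i ^ 2) (hf0 : ∀ i, 0 ≤ f i) (hg0 : ∀ i, 0 ≤ g i) :
    ∑' i, f i * g i ≤ Real.sqrt (∑' i, f i ^ 2) * Real.sqrt (∑' i, g i ^ 2) := by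
  refine Summable.tsum_le_of_sum_le (summable_mul_of_sq hf hg hf0 hg0) (fun s => ?_)
  calc ∑ i ∈ s, f i * g i ≤ Real.sqrt (∑ i ∈ s, f i ^ 2) * Real.sqrt (∑ i ∈ s, g i ^ 2) := by
        rw [← Real.sqrt_mul (Finset.sum_nonneg fun i _ => sq_nonneg _)]
        exact Real.le_sqrt_of_sq_le
          (Finset.sum_mul_sq_le_sq_mul_sq s f g)
    _ ≤ Real.sqrt (∑' i, f i ^ 2) * Real.sqrt (∑' i, g i ^ 2) := by
        gcongr <;> [exact Summable.sum_le_tsum s (fun i _ => sq_nonneg _) hf;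
          exact Summable.sum_le_tsum s (fun i _ => sq_nonneg _) hg]

lemma summable_inv_one_add_sq : Summable fun l : ℤ => ((1:ℝ) + (l:ℝ) ^ 2)⁻¹ := by
  have h1 : Summable fun l : ℤ => (1 / (l:ℝ) ^ 2) := Real.summable_one_div_int_pow.2 one_lt_two
  have h2 : Summable fun l : ℤ => (if l = 0 then (1:ℝ) else 0) :=
    summable_of_ne_finset_zero (s := {0}) (fun l hl => by simp_all)
  refine Summable.of_nonneg_of_le (fun l => by positivity) (fun l => ?_) (h2.add h1)
  by_cases hl : l = 0
  · simp [hl]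
  · have hl2 : (1:ℝ) ≤ (l:ℝ) ^ 2 := by
      have : (1:ℝ) ≤ |(l:ℝ)| := by
        rw [← Int.cast_abs]; exact_mod_cast Int.one_le_abs (by simpa using hl)
      nlinarith [_root_.sq_abs (l:ℝ)]
    simp only [hl, if_false, zero_add]
    rw [one_div, inv_le_inv₀ (by positivity) (by positivity)]
    linarith

-- ℓ¹ * ℓ² convolution-type bound: if d ∈ ℓ¹ (nonneg) and e² ∈ ℓ¹ (e nonneg), then
-- k ↦ (∑' l, d l * e (l - k))² is summable.
lemma summable_conv_sq {d e : ℤ → ℝ} (hd0 : ∀ i, 0 ≤ d i) (he0 : ∀ i, 0 ≤ e i)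
    (hd : Summable d) (he : Summable fun i => e i ^ 2) :
    Summable fun k : ℤ => (∑' l : ℤ, d l * e (l - k)) ^ 2 := by
  -- each inner sum is summable
  have hE : ∀ m : ℤ, e m ^ 2 ≤ ∑' i, e i ^ 2 := fun m => Summable.le_tsum he m (fun i _ => sq_nonneg _)
  have hinner : ∀ k : ℤ, Summable fun l => d l * e (l - k) ^ 2 := by
    intro k
    refine Summable.of_nonneg_of_le (fun l => mul_nonneg (hd0 l) (sq_nonneg _)) (fun l => ?_)
      (hd.mul_right (∑' i, e i ^ 2))
    exact mul_le_mul_of_nonneg_left (hE _) (hd0 l)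
  have hinner' : ∀ k : ℤ, Summable fun l => d l * e (l - k) := by
    intro k
    refine Summable.of_nonneg_of_le (fun l => mul_nonneg (hd0 l) (he0 _)) (fun l => ?_)
      (hd.add (hinner k))
    have : e (l - k) ≤ 1 + e (l - k) ^ 2 := by nlinarith [he0 (l - k), sq_nonneg (e (l-k) - 1)]
    calc d l * e (l - k) ≤ d l * (1 + e (l - k) ^ 2) :=
          mul_le_mul_of_nonneg_left this (hd0 l)
      _ = d l + d l * e (l - k) ^ 2 := by ring
  -- Fubini: k ↦ ∑' l, d l * e(l-k)² is summable
  have hprod : Summable fun p : ℤ × ℤ => d p.1 * e p.2 ^ 2 :=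
    hd.mul_of_nonneg he hd0 (fun i => sq_nonneg _)
  have hequiv : Summable fun p : ℤ × ℤ => d p.2 * e (p.2 - p.1) ^ 2 := by
    have hinj : Function.Injective (fun p : ℤ × ℤ => (p.2, p.2 - p.1)) := by
      intro p q h
      simp only [Prod.mk.injEq] at h
      obtain ⟨h1, h2⟩ := h
      obtain ⟨p1, p2⟩ := p
      obtain ⟨q1, q2⟩ := q
      simp only [Prod.mk.injEq]
      omega
    have h2 := hprod.comp_injective hinj
    simpa [Function.comp_def] using h2
  have hG : Summable fun k : ℤ => ∑' l : ℤ, d l * e (l - k) ^ 2 :=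
    ((summable_prod_of_nonneg (fun p => mul_nonneg (hd0 _) (sq_nonneg _))).1 hequiv).2
  -- Cauchy–Schwarz per k, then comparison
  refine Summable.of_nonneg_of_le (fun k => sq_nonneg _) (fun k => ?_)
    (hG.mul_left (∑' i, d i))
  have hf2 : Summable fun l : ℤ => Real.sqrt (d l) ^ 2 :=
    hd.congr (fun l => (Real.sq_sqrt (hd0 l)).symm)
  have hg2 : Summable fun l : ℤ => (Real.sqrt (d l) * e (l - k)) ^ 2 :=
    (hinner k).congr (fun l => by rw [mul_pow, Real.sq_sqrt (hd0 l)])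
  have key := tsum_CS hf2 hg2 (fun l => Real.sqrt_nonneg _)
    (fun l => mul_nonneg (Real.sqrt_nonneg _) (he0 _))
  have e1 : (∑' l : ℤ, Real.sqrt (d l) * (Real.sqrt (d l) * e (l - k))) =
      ∑' l : ℤ, d l * e (l - k) := by
    refine tsum_congr (fun l => ?_)
    rw [← mul_assoc, Real.mul_self_sqrt (hd0 l)]
  have e2 : (∑' l : ℤ, Real.sqrt (d l) ^ 2) = ∑' i, d i :=
    tsum_congr (fun l => Real.sq_sqrt (hd0 l))
  have e3 : (∑' l : ℤ, (Real.sqrt (d l) * e (l - k)) ^ 2) = ∑' l : ℤ, d l * e (l - k) ^ 2 :=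
    tsum_congr (fun l => by rw [mul_pow, Real.sq_sqrt (hd0 l)])
  rw [e1, e2, e3] at key
  have hP0 : 0 ≤ ∑' l : ℤ, d l * e (l - k) :=
    tsum_nonneg (fun l => mul_nonneg (hd0 l) (he0 _))
  have hD0 : 0 ≤ ∑' i, d i := tsum_nonneg hd0
  have hG0 : 0 ≤ ∑' l : ℤ, d l * e (l - k) ^ 2 :=
    tsum_nonneg (fun l => mul_nonneg (hd0 l) (sq_nonneg _))
  calc (∑' l : ℤ, d l * e (l - k)) ^ 2
      ≤ (Real.sqrt (∑' i, d i) * Real.sqrt (∑' l : ℤ, d l * e (l - k) ^ 2)) ^ 2 :=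
        pow_le_pow_left₀ hP0 key 2
    _ = (∑' i, d i) * ∑' l : ℤ, d l * e (l - k) ^ 2 := by
        rw [mul_pow, Real.sq_sqrt hD0, Real.sq_sqrt hG0]

set_option maxHeartbeats 2000000 in
/-- Discrete Leibniz-commutator estimate, case `n = 0`.  In terms of Fourier
coefficients `u : ℤ → ℂ`, the `k`-th Fourier coefficient of
`F_α(u) = ū |D|^α u + u |D|^α ū - |D|^α(|u|²)` is
`∑_l (|l|^α + |k-l|^α - |k|^α) u_l conj (u_{l-k})`, while
`‖|D|^{α/2} ũ‖_{L⁴}⁴ = ∑_k (∑_l |l|^{α/2} |k-l|^{α/2} |u_l| |u_{l-k}|)²`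
where `ũ = ∑ |u_k| e^{ikx}` (Parseval).  The statement
`‖F_α(u)‖_{L²} ≤ 2 ‖|D|^{α/2} ũ‖_{L⁴}²` then reads, after squaring: -/
theorem commutator_L2_est_n_zero (α : ℝ) (hα : 1 ≤ α) (hα2 : α ≤ 2) (u : ℤ → ℂ)
    (hu : Summable fun k : ℤ => (1 + |(k : ℝ)| ^ 2) ^ α * ‖u k‖ ^ 2) :
    ∑' k : ℤ,
        ‖∑' l : ℤ,
            (((|(l : ℝ)| ^ α + |((k - l : ℤ) : ℝ)| ^ α - |(k : ℝ)| ^ α) : ℝ) : ℂ) *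
              u l * starRingEnd ℂ (u (l - k))‖ ^ 2 ≤
      2 ^ 2 *
        ∑' k : ℤ,
          (∑' l : ℤ,
              |(l : ℝ)| ^ (α / 2) * |((k - l : ℤ) : ℝ)| ^ (α / 2) * ‖u l‖ *
                ‖u (l - k)‖) ^ 2 := by
  have hα0 : (0:ℝ) ≤ α := by linarith
  set a : ℤ → ℝ := fun l => |(l:ℝ)| ^ (α/2) * ‖u l‖ with ha_def
  set c : ℤ → ℝ := fun l => ((1:ℝ) + (l:ℝ)^2) ^ (α/4) * a l with hc_def
  set ψ : ℤ → ℝ := fun l => ((1:ℝ) + (l:ℝ)^2) ^ (-(α/4)) with hψ_def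
  have hbase : ∀ l : ℤ, (0:ℝ) < 1 + (l:ℝ)^2 := fun l => by positivity
  have hbase1 : ∀ l : ℤ, (1:ℝ) ≤ 1 + (l:ℝ)^2 := fun l => by nlinarith [sq_nonneg ((l:ℝ))]
  have ha0 : ∀ l, 0 ≤ a l :=
    fun l => mul_nonneg (Real.rpow_nonneg (abs_nonneg _) _) (norm_nonneg _)
  have hc0 : ∀ l, 0 ≤ c l := fun l => mul_nonneg (Real.rpow_nonneg (hbase l).le _) (ha0 l)
  have hψ0 : ∀ l, 0 ≤ ψ l := fun l => Real.rpow_nonneg (hbase l).le _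
  have hψ1 : ∀ l, ψ l ≤ 1 :=
    fun l => Real.rpow_le_one_of_one_le_of_nonpos (hbase1 l) (by linarith)
  have haψ : ∀ l, a l = c l * ψ l := by
    intro l
    simp only [hc_def, hψ_def]
    rw [mul_comm (((1:ℝ) + (l:ℝ)^2) ^ (α/4)) (a l), mul_assoc,
      ← Real.rpow_add (hbase l), add_neg_cancel, Real.rpow_zero, mul_one]
  -- c² is summable
  have habs : ∀ l : ℤ, (|(l:ℝ)| ^ (α/2)) ^ 2 = |(l:ℝ)| ^ α :=
    fun l => sq_rpow_half (abs_nonneg _)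
  have hpow_le : ∀ l : ℤ, |(l:ℝ)| ^ α ≤ ((1:ℝ) + (l:ℝ)^2) ^ (α/2) := by
    intro l
    have h1 : |(l:ℝ)| ^ α = ((l:ℝ)^2) ^ (α/2) := by
      rw [← _root_.sq_abs, ← Real.rpow_natCast |(l:ℝ)| 2, ← Real.rpow_mul (abs_nonneg _)]
      norm_num
      congr 1
      ring
    rw [h1]
    exact Real.rpow_le_rpow (sq_nonneg _) (by linarith) (by linarith)
  have hq : ∀ t : ℝ, 0 ≤ t → (t ^ (α/4)) ^ 2 = t ^ (α/2) := by
    intro t ht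
    have h4 : α/4 = (α/2)/2 := by ring
    rw [h4]
    exact sq_rpow_half ht
  have hc2 : Summable fun l : ℤ => c l ^ 2 := by
    refine Summable.of_nonneg_of_le (fun l => sq_nonneg _) (fun l => ?_) hu
    simp only [hc_def, ha_def]
    have e1 : (((1:ℝ) + (l:ℝ)^2) ^ (α/4) * (|(l:ℝ)| ^ (α/2) * ‖u l‖)) ^ 2
        = ((1:ℝ) + (l:ℝ)^2) ^ (α/2) * (|(l:ℝ)| ^ α * ‖u l‖ ^ 2) := by
      rw [mul_pow, mul_pow, hq _ (hbase l).le, habs l]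
    rw [e1, _root_.sq_abs]
    have e2 : ((1:ℝ) + (l:ℝ)^2) ^ α = ((1:ℝ) + (l:ℝ)^2) ^ (α/2) * ((1:ℝ) + (l:ℝ)^2) ^ (α/2) := by
      rw [← Real.rpow_add (hbase l)]; norm_num
    rw [e2, mul_assoc]
    refine mul_le_mul_of_nonneg_left ?_ (Real.rpow_nonneg (hbase l).le _)
    exact mul_le_mul_of_nonneg_right (hpow_le l) (sq_nonneg _)
  have ha2 : Summable fun l : ℤ => a l ^ 2 := by
    refine Summable.of_nonneg_of_le (fun l => sq_nonneg _) (fun l => ?_) hc2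
    rw [haψ l, mul_pow]
    have hψsq : ψ l ^ 2 ≤ 1 := by nlinarith [hψ0 l, hψ1 l]
    exact mul_le_of_le_one_right (sq_nonneg _) hψsq
  -- ψ⁴ is summable
  have hψ4 : Summable fun l : ℤ => (ψ l ^ 2) ^ 2 := by
    refine Summable.of_nonneg_of_le (fun l => sq_nonneg _) (fun l => ?_) summable_inv_one_add_sq
    have e1 : (ψ l ^ 2) ^ 2 = ((1:ℝ) + (l:ℝ)^2) ^ (-α) := by
      simp only [hψ_def]
      rw [← Real.rpow_natCast (((1:ℝ) + (l:ℝ)^2) ^ (-(α/4))) 2,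
        ← Real.rpow_mul (hbase l).le, ← Real.rpow_natCast _ 2, ← Real.rpow_mul (hbase l).le]
      norm_num
      congr 1
      ring
    rw [e1, ← Real.rpow_neg_one ((1:ℝ) + (l:ℝ)^2)]
    exact Real.rpow_le_rpow_of_exponent_le (hbase1 l) (by linarith)
  -- shifted sequences
  have hashift : ∀ k : ℤ, Summable fun l : ℤ => a (l - k) ^ 2 :=
    fun k => (Equiv.subRight k).summable_iff.2 ha2
  have hSsummand : ∀ k : ℤ, Summable fun l : ℤ => a l * a (l - k) :=
    fun k => summable_mul_of_sq ha2 (hashift k) ha0 (fun l => ha0 _)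
  set S : ℤ → ℝ := fun k => ∑' l : ℤ, a l * a (l - k) with hS_def
  set P : ℤ → ℝ := fun k => ∑' l : ℤ, c l ^ 2 * ψ (l - k) ^ 2 with hP_def
  set Q : ℤ → ℝ := fun k => ∑' l : ℤ, c (l - k) ^ 2 * ψ l ^ 2 with hQ_def
  have hS0 : ∀ k, 0 ≤ S k := fun k => tsum_nonneg (fun l => mul_nonneg (ha0 l) (ha0 _))
  have hP0 : ∀ k, 0 ≤ P k := fun k => tsum_nonneg (fun l => mul_nonneg (sq_nonneg _) (sq_nonneg _))
  have hQ0 : ∀ k, 0 ≤ Q k := fun k => tsum_nonneg (fun l => mul_nonneg (sq_nonneg _) (sq_nonneg _))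
  have hψle1sq : ∀ m : ℤ, ψ m ^ 2 ≤ 1 := fun m => by nlinarith [hψ0 m, hψ1 m]
  have hf2 : ∀ k : ℤ, Summable fun l : ℤ => (c l * ψ (l - k)) ^ 2 := by
    intro k
    refine Summable.of_nonneg_of_le (fun l => sq_nonneg _) (fun l => ?_) hc2
    rw [mul_pow]
    exact mul_le_of_le_one_right (sq_nonneg _) (hψle1sq _)
  have hg2 : ∀ k : ℤ, Summable fun l : ℤ => (c (l - k) * ψ l) ^ 2 := by
    intro k
    refine Summable.of_nonneg_of_le (fun l => sq_nonneg _) (fun l => ?_)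
      ((Equiv.subRight k).summable_iff.2 hc2)
    rw [mul_pow]
    exact mul_le_of_le_one_right (sq_nonneg _) (hψle1sq _)
  have hCS : ∀ k, S k ≤ Real.sqrt (P k) * Real.sqrt (Q k) := by
    intro k
    have h1 : S k = ∑' l : ℤ, (c l * ψ (l - k)) * (c (l - k) * ψ l) := by
      refine tsum_congr fun l => ?_
      rw [haψ l, haψ (l - k)]; ring
    have h2 := tsum_CS (hf2 k) (hg2 k)
      (fun l => mul_nonneg (hc0 l) (hψ0 _)) (fun l => mul_nonneg (hc0 _) (hψ0 l))
    have e1 : (∑' l : ℤ, (c l * ψ (l - k)) ^ 2) = P k :=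
      tsum_congr fun l => by rw [mul_pow]
    have e2 : (∑' l : ℤ, (c (l - k) * ψ l) ^ 2) = Q k :=
      tsum_congr fun l => by rw [mul_pow]
    rw [h1]
    rw [e1, e2] at h2
    exact h2
  have hSsq_le : ∀ k, S k ^ 2 ≤ (P k ^ 2 + Q k ^ 2) / 2 := by
    intro k
    have h2 : S k ^ 2 ≤ P k * Q k := by
      calc S k ^ 2 ≤ (Real.sqrt (P k) * Real.sqrt (Q k)) ^ 2 :=
            pow_le_pow_left₀ (hS0 k) (hCS k) 2
        _ = P k * Q k := by rw [mul_pow, Real.sq_sqrt (hP0 k), Real.sq_sqrt (hQ0 k)]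
    nlinarith [sq_nonneg (P k - Q k)]
  have hPsq : Summable fun k => P k ^ 2 := by
    have h := summable_conv_sq (d := fun i => c i ^ 2) (e := fun i => ψ i ^ 2)
      (fun i => sq_nonneg (c i)) (fun i => sq_nonneg (ψ i)) hc2 hψ4
    exact h.congr fun k => by rw [hP_def]
  have hQP : ∀ k, Q k = P (-k) := by
    intro k
    have h := (Equiv.addRight k).tsum_eq (f := fun l : ℤ => c (l - k) ^ 2 * ψ l ^ 2)
    rw [hQ_def]
    simp only
    rw [← h]
    refine tsum_congr fun m => ?_
    simp only [Equiv.coe_addRight, add_sub_cancel_right, sub_neg_eq_add]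
  have hQsq : Summable fun k => Q k ^ 2 := by
    have h : Summable fun k => P (-k) ^ 2 := by
      have := (Equiv.neg ℤ).summable_iff (f := fun k => P k ^ 2)
      exact this.2 hPsq
    exact h.congr fun k => by rw [hQP k]
  have hSsq : Summable fun k => S k ^ 2 :=
    Summable.of_nonneg_of_le (fun k => sq_nonneg _) hSsq_le ((hPsq.add hQsq).div_const 2)
  -- pointwise bound on the commutator symbol
  have hkey : ∀ k l : ℤ,
      ‖(((|(l : ℝ)| ^ α + |((k - l : ℤ) : ℝ)| ^ α - |(k : ℝ)| ^ α) : ℝ) : ℂ) *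
        u l * starRingEnd ℂ (u (l - k))‖ ≤ 2 * (a l * a (l - k)) := by
    intro k l
    have h1 : |(_root_.abs (l:ℝ)) - _root_.abs (((k - l : ℤ) : ℝ))| ≤ |(k:ℝ)| := by
      push_cast
      rw [abs_sub_comm (k:ℝ) (l:ℝ)]
      have h := abs_abs_sub_abs_le_abs_sub (l:ℝ) ((l:ℝ) - (k:ℝ))
      simpa using h
    have h2 : |(k:ℝ)| ≤ |(l:ℝ)| + |((k - l : ℤ) : ℝ)| := by
      push_cast
      have h := abs_add_le (l:ℝ) ((k:ℝ) - (l:ℝ))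
      simpa using h
    have hk := key_ineq α hα0 hα2 (abs_nonneg (l:ℝ)) (abs_nonneg (((k - l : ℤ) : ℝ)))
      (abs_nonneg (k:ℝ)) h1 h2
    have habs2 : |((k - l : ℤ):ℝ)| = |((l - k : ℤ):ℝ)| := by push_cast; rw [abs_sub_comm]
    have hnorm : ‖(((|(l : ℝ)| ^ α + |((k - l : ℤ) : ℝ)| ^ α - |(k : ℝ)| ^ α) : ℝ) : ℂ) *
        u l * starRingEnd ℂ (u (l - k))‖ =
        _root_.abs (|(l : ℝ)| ^ α + |((k - l : ℤ) : ℝ)| ^ α - |(k : ℝ)| ^ α) * (‖u l‖ * ‖u (l - k)‖) := by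
      simp only [norm_mul, Complex.norm_real, Real.norm_eq_abs, RCLike.norm_conj, mul_assoc]
    rw [hnorm]
    calc _root_.abs (|(l : ℝ)| ^ α + |((k - l : ℤ) : ℝ)| ^ α - |(k : ℝ)| ^ α) * (‖u l‖ * ‖u (l - k)‖)
        ≤ (2 * (|(l:ℝ)| ^ (α/2) * |((k - l : ℤ) : ℝ)| ^ (α/2))) * (‖u l‖ * ‖u (l - k)‖) :=
          mul_le_mul_of_nonneg_right hk (by positivity)
      _ = 2 * (a l * a (l - k)) := by
          simp only [ha_def]
          rw [habs2]
          ring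
  have hTsummand : ∀ k : ℤ, Summable fun l : ℤ =>
      ‖(((|(l : ℝ)| ^ α + |((k - l : ℤ) : ℝ)| ^ α - |(k : ℝ)| ^ α) : ℝ) : ℂ) *
        u l * starRingEnd ℂ (u (l - k))‖ := fun k =>
    Summable.of_nonneg_of_le (fun l => norm_nonneg _) (hkey k) ((hSsummand k).mul_left 2)
  have hT_le : ∀ k : ℤ,
      ‖∑' l : ℤ, (((|(l : ℝ)| ^ α + |((k - l : ℤ) : ℝ)| ^ α - |(k : ℝ)| ^ α) : ℝ) : ℂ) *
        u l * starRingEnd ℂ (u (l - k))‖ ^ 2 ≤ 4 * S k ^ 2 := by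
    intro k
    have h1 : ‖∑' l : ℤ, (((|(l : ℝ)| ^ α + |((k - l : ℤ) : ℝ)| ^ α - |(k : ℝ)| ^ α) : ℝ) : ℂ) *
        u l * starRingEnd ℂ (u (l - k))‖ ≤ 2 * S k := by
      calc ‖∑' l : ℤ, (((|(l : ℝ)| ^ α + |((k - l : ℤ) : ℝ)| ^ α - |(k : ℝ)| ^ α) : ℝ) : ℂ) *
            u l * starRingEnd ℂ (u (l - k))‖
          ≤ ∑' l : ℤ, ‖(((|(l : ℝ)| ^ α + |((k - l : ℤ) : ℝ)| ^ α - |(k : ℝ)| ^ α) : ℝ) : ℂ) *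
            u l * starRingEnd ℂ (u (l - k))‖ := norm_tsum_le_tsum_norm (hTsummand k)
        _ ≤ ∑' l : ℤ, 2 * (a l * a (l - k)) :=
            Summable.tsum_le_tsum (hkey k) (hTsummand k) ((hSsummand k).mul_left 2)
        _ = 2 * S k := tsum_mul_left
    calc ‖∑' l : ℤ, (((|(l : ℝ)| ^ α + |((k - l : ℤ) : ℝ)| ^ α - |(k : ℝ)| ^ α) : ℝ) : ℂ) *
          u l * starRingEnd ℂ (u (l - k))‖ ^ 2
        ≤ (2 * S k) ^ 2 := pow_le_pow_left₀ (norm_nonneg _) h1 2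
      _ = 4 * S k ^ 2 := by ring
  have hT : Summable fun k : ℤ =>
      ‖∑' l : ℤ, (((|(l : ℝ)| ^ α + |((k - l : ℤ) : ℝ)| ^ α - |(k : ℝ)| ^ α) : ℝ) : ℂ) *
        u l * starRingEnd ℂ (u (l - k))‖ ^ 2 :=
    Summable.of_nonneg_of_le (fun k => sq_nonneg _) hT_le (hSsq.mul_left 4)
  have hRHS : (∑' k : ℤ, (∑' l : ℤ, |(l : ℝ)| ^ (α / 2) * |((k - l : ℤ) : ℝ)| ^ (α / 2) *
      ‖u l‖ * ‖u (l - k)‖) ^ 2) = ∑' k, S k ^ 2 := by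
    refine tsum_congr fun k => ?_
    congr 1
    refine tsum_congr fun l => ?_
    have habs2 : |((k - l : ℤ):ℝ)| = |((l - k : ℤ):ℝ)| := by push_cast; rw [abs_sub_comm]
    simp only [ha_def]
    rw [habs2]
    ring
  rw [hRHS]
  calc (∑' k : ℤ, ‖∑' l : ℤ, (((|(l : ℝ)| ^ α + |((k - l : ℤ) : ℝ)| ^ α - |(k : ℝ)| ^ α) : ℝ) : ℂ) *
        u l * starRingEnd ℂ (u (l - k))‖ ^ 2)
      ≤ ∑' k : ℤ, 4 * S k ^ 2 := Summable.tsum_le_tsum hT_le hT (hSsq.mul_left 4)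
    _ = 2 ^ 2 * ∑' k, S k ^ 2 := by rw [tsum_mul_left]; norm_num
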